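/- Let L > 0, C > 0 and let θ : [0,L] → ℝ be smooth. For each N ∈ ℕ let 0 = s₀^N < s₁^N < … < s_N^N = L be nodes satisfying |s_i^N − s_{i−1}^N − L/N| ≤ C·(L/N)³ for all i = 1,…,N, and set σ_i^N := (s_{i−1}^N + s_i^N)/2 for i = 1,…,N. Then lim_{N→∞} (L/N)·Σ_{i=1}^{N−1} |(θ(σ_{i+1}^N) − θ(σ_i^N))·(N/L)|² = ∫₀^L |θ'(s)|² ds. -/

import Mathlib

open MeasureTheory Set Filter Topology

private lemma mono_aux (f : ℕ → ℝ) (n : ℕ) (h : ∀ i, i < n → f i < f (i+1)) :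
    ∀ i j, i ≤ j → j ≤ n → f i ≤ f j := by
  intro i j hij hjn
  induction j with
  | zero => simp [Nat.le_zero.mp hij]
  | succ k ih =>
    rcases Nat.lt_or_ge i (k+1) with h1 | h1
    · exact le_trans (ih (Nat.lt_succ_iff.mp h1) (by omega)) (h k (by omega)).le
    · have : i = k+1 := by omega
      simp [this]

set_option maxHeartbeats 1000000 in
/-- convergence of the discrete torsional energy (first difference quotients
at midpoints of consecutive almost equidistant nodes) to `∫₀^L |θ'|²` for smooth `θ`. -/
theorem stmt18 (L C : ℝ) (hL : 0 < L) (hC : 0 < C)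
    (θ : ℝ → ℝ)
    (hθ : ContDiffOn ℝ (⊤ : ℕ∞) θ (Icc 0 L))
    (s : ℕ → ℕ → ℝ)
    (hs0 : ∀ N : ℕ, 1 ≤ N → s N 0 = 0)
    (hsN : ∀ N : ℕ, 1 ≤ N → s N N = L)
    (hmono : ∀ N : ℕ, 1 ≤ N → ∀ i, i < N → s N i < s N (i + 1))
    (hclose : ∀ N : ℕ, 1 ≤ N → ∀ i, 1 ≤ i → i ≤ N →
      |s N i - s N (i - 1) - L / N| ≤ C * (L / N) ^ 3) :
    Filter.Tendsto
      (fun N : ℕ => (L / N) * ∑ i ∈ Finset.Icc 1 (N - 1),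
        |(θ ((s N i + s N (i + 1)) / 2) - θ ((s N (i - 1) + s N i) / 2)) * ((N : ℝ) / L)| ^ 2)
      atTop (𝓝 (∫ σ in (0:ℝ)..L, (derivWithin θ (Icc 0 L) σ) ^ 2)) := by
  set g : ℝ → ℝ := derivWithin θ (Icc 0 L) with hgdef
  have hgc : ContinuousOn g (Icc 0 L) :=
    hθ.continuousOn_derivWithin (uniqueDiffOn_Icc hL) (by exact_mod_cast le_top)
  have hθc : ContinuousOn θ (Icc 0 L) := hθ.continuousOn
  have hder : ∀ x ∈ Ioo 0 L, HasDerivAt θ (g x) x := by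
    intro x hx
    have hmem : Icc 0 L ∈ 𝓝 x := Icc_mem_nhds hx.1 hx.2
    have hd : DifferentiableWithinAt ℝ θ (Icc 0 L) x :=
      (hθ.differentiableOn (by simp)) x ⟨hx.1.le, hx.2.le⟩
    have hda : DifferentiableAt ℝ θ x := hd.differentiableAt hmem
    rw [hgdef, derivWithin_of_mem_nhds hmem]
    exact hda.hasDerivAt
  obtain ⟨M, hM⟩ : ∃ M, ∀ x ∈ Icc 0 L, |g x| ≤ M := by
    obtain ⟨M, hM⟩ := isCompact_Icc.exists_bound_of_continuousOn hgc
    exact ⟨M, fun x hx => hM x hx⟩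
  have hM0 : 0 ≤ M := le_trans (abs_nonneg _) (hM 0 ⟨le_refl 0, hL.le⟩)
  set h : ℝ → ℝ := fun x => (g x)^2 with hhdef
  have hhc : ContinuousOn h (Icc 0 L) := hgc.pow 2
  have hhb : ∀ x ∈ Icc 0 L, |h x| ≤ M^2 := by
    intro x hx
    have := hM x hx
    simp only [hhdef]
    rw [abs_of_nonneg (sq_nonneg _), ← sq_abs]
    exact pow_le_pow_left₀ (abs_nonneg _) this 2
  have huc : UniformContinuousOn h (Icc 0 L) :=
    isCompact_Icc.uniformContinuousOn_of_continuous hhc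
  rw [Metric.tendsto_atTop]
  intro ε hε
  obtain ⟨d₀, hd₀, hucd⟩ := Metric.uniformContinuousOn_iff.mp huc (ε/(4*L)) (by positivity)
  have hLN : Tendsto (fun N : ℕ => L / N) atTop (𝓝 0) := tendsto_const_div_atTop_nhds_zero_nat L
  have hf : Tendsto (fun N : ℕ =>
      M^2*C*(L/N)^2*L + M^2*((L/N) + C*(L/N)^3)) atTop (𝓝 0) := by
    have h1 := ((hLN.pow 2).const_mul (M^2*C)).mul_const L
    have h2 := (hLN.add ((hLN.pow 3).const_mul C)).const_mul (M^2)
    simpa using h1.add h2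
  have hev1 : ∀ᶠ N : ℕ in atTop,
      M^2*C*(L/N)^2*L + M^2*((L/N) + C*(L/N)^3) < ε/2 :=
    hf.eventually_lt_const (by positivity)
  have hev2 : ∀ᶠ N : ℕ in atTop, (L/N) + C*(L/N)^3 < d₀ := by
    have := hLN.add ((hLN.pow 3).const_mul C)
    simp only [zero_pow, mul_zero, add_zero, ne_eq, OfNat.ofNat_ne_zero,
      not_false_eq_true] at this
    exact this.eventually_lt_const hd₀
  have hev3 : ∀ᶠ N : ℕ in atTop, C*(L/N)^2 < 1 := by
    have := (hLN.pow 2).const_mul C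
    simp only [zero_pow, mul_zero, ne_eq, OfNat.ofNat_ne_zero, not_false_eq_true] at this
    exact this.eventually_lt_const one_pos
  obtain ⟨N₀, hN₀⟩ := eventually_atTop.mp
    ((hev1.and (hev2.and hev3)).and (eventually_ge_atTop 1))
  refine ⟨N₀, fun n hn => ?_⟩
  obtain ⟨⟨hA, hB, hCs⟩, hn1⟩ := hN₀ n hn
  have hnn : (0:ℝ) < (n:ℝ) := by exact_mod_cast Nat.lt_of_lt_of_le Nat.zero_lt_one hn1
  set δ : ℝ := L / (n:ℝ) with hδdef
  have hδ : 0 < δ := div_pos hL hnn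
  -- basic node facts
  have hmono' : ∀ i j, i ≤ j → j ≤ n → s n i ≤ s n j :=
    mono_aux (s n) n (fun i hi => hmono n hn1 i hi)
  have hmem : ∀ i, i ≤ n → s n i ∈ Icc 0 L := by
    intro i hi
    constructor
    · rw [← hs0 n hn1]; exact hmono' 0 i (Nat.zero_le _) hi
    · rw [← hsN n hn1]; exact hmono' i n hi le_rfl
  have hgap : ∀ i, i < n → |s n (i+1) - s n i - δ| ≤ C*δ^3 := by
    intro i hi
    have := hclose n hn1 (i+1) (by omega) (by omega)
    simpa using this
  set τ : ℕ → ℝ := fun i => (s n i + s n (i+1))/2 with hτdef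
  have hτgap : ∀ i, 1 ≤ i → i ≤ n - 1 → |τ i - τ (i-1) - δ| ≤ C*δ^3 := by
    intro i hi1 hi2
    obtain ⟨j, rfl⟩ : ∃ j, i = j + 1 := ⟨i-1, by omega⟩
    simp only [hτdef, Nat.add_sub_cancel]
    have g1 := hgap j (by omega)
    have g2 := hgap (j+1) (by omega)
    have e : (s n (j+1) + s n (j+1+1))/2 - (s n j + s n (j+1))/2 - δ
        = ((s n (j+1+1) - s n (j+1) - δ) + (s n (j+1) - s n j - δ))/2 := by ring
    rw [e]
    calc |((s n (j+1+1) - s n (j+1) - δ) + (s n (j+1) - s n j - δ))/2|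
        ≤ (|s n (j+1+1) - s n (j+1) - δ| + |s n (j+1) - s n j - δ|)/2 := by
          rw [abs_div]; simp only [abs_two]
          exact div_le_div_of_nonneg_right (abs_add_le _ _) (by norm_num)
      _ ≤ (C*δ^3 + C*δ^3)/2 := by linarith
      _ = C*δ^3 := by ring
  have hCδ : C*δ^3 < δ := by nlinarith
  have hτlt : ∀ i, 1 ≤ i → i ≤ n - 1 → τ (i-1) < τ i := by
    intro i h1 h2
    have := abs_le.mp (hτgap i h1 h2)
    linarith [this.1]
  have hτmem : ∀ i, i ≤ n - 1 → τ i ∈ Icc 0 L := by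
    intro i hi
    have m1 := hmem i (by omega)
    have m2 := hmem (i+1) (by omega)
    constructor
    · simp only [hτdef]; linarith [m1.1, m2.1]
    · simp only [hτdef]; linarith [m1.2, m2.2]
  have hspos : ∀ i, 1 ≤ i → i ≤ n → 0 < s n i := by
    intro i h1 h2
    have := hmono n hn1 0 (by omega)
    rw [hs0 n hn1] at this
    exact lt_of_lt_of_le this (hmono' 1 i h1 h2)
  have hsL : ∀ i, i ≤ n - 1 → s n i < L := by
    intro i hi
    have h2 := hmono n hn1 (n-1) (by omega)
    have h3 : n - 1 + 1 = n := by omega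
    rw [h3, hsN n hn1] at h2
    exact lt_of_le_of_lt (hmono' i (n-1) hi (by omega)) h2
  -- per-term key bound
  have key : ∀ i ∈ Finset.Icc 1 (n-1),
      |δ * ((θ (τ i) - θ (τ (i-1)))/δ)^2 - ∫ x in τ (i-1)..τ i, h x|
        ≤ (ε/(4*L) + M^2*C*δ^2) * (τ i - τ (i-1)) := by
    intro i hi
    obtain ⟨h1, h2⟩ := Finset.mem_Icc.mp hi
    have hab : τ (i-1) < τ i := hτlt i h1 h2
    have haI : τ (i-1) ∈ Icc 0 L := hτmem (i-1) (by omega)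
    have hbI : τ i ∈ Icc 0 L := hτmem i h2
    have hsub : Icc (τ (i-1)) (τ i) ⊆ Icc 0 L := Icc_subset_Icc haI.1 hbI.2
    have haIoo : 0 < τ (i-1) := by
      have hp := hspos i h1 (by omega)
      have hq := (hmem (i-1) (by omega)).1
      have e : i - 1 + 1 = i := by omega
      simp only [hτdef, e]
      linarith
    have hbIoo : τ i < L := by
      have hp := hsL i h2
      have hq := (hmem (i+1) (by omega)).2
      simp only [hτdef]
      linarith
    have hIoo : Ioo (τ (i-1)) (τ i) ⊆ Ioo 0 L := fun x hx =>
      ⟨lt_trans haIoo hx.1, lt_trans hx.2 hbIoo⟩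
    obtain ⟨c, hc, hgc'⟩ := exists_hasDerivAt_eq_slope θ g hab (hθc.mono hsub)
      (fun x hx => hder x (hIoo hx))
    have hcI : c ∈ Icc 0 L := hsub (Ioo_subset_Icc_self hc)
    have hΔ : |τ i - τ (i-1) - δ| ≤ C*δ^3 := hτgap i h1 h2
    have hΔpos : 0 < τ i - τ (i-1) := sub_pos.mpr hab
    have hΔle : τ i - τ (i-1) ≤ δ + C*δ^3 := by linarith [(abs_le.mp hΔ).2]
    have hθab : θ (τ i) - θ (τ (i-1)) = g c * (τ i - τ (i-1)) := by
      rw [hgc']; field_simp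
    have hterm : δ * ((θ (τ i) - θ (τ (i-1)))/δ)^2
        = (g c)^2 * (τ i - τ (i-1))^2 / δ := by
      rw [hθab]; field_simp
    have hgcM : |g c| ≤ M := hM c hcI
    have hg2 : (g c)^2 ≤ M^2 := by
      rw [← sq_abs]; exact pow_le_pow_left₀ (abs_nonneg _) hgcM 2
    have part1 : |(g c)^2 * (τ i - τ (i-1))^2 / δ - (g c)^2 * (τ i - τ (i-1))|
        ≤ M^2*C*δ^2*(τ i - τ (i-1)) := by
      have e1 : (g c)^2 * (τ i - τ (i-1))^2 / δ - (g c)^2 * (τ i - τ (i-1))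
          = (g c)^2 * (τ i - τ (i-1)) * ((τ i - τ (i-1)) - δ) / δ := by
        field_simp
      rw [e1, abs_div, abs_of_pos hδ, abs_mul, abs_mul,
        abs_of_nonneg (sq_nonneg (g c)), abs_of_pos hΔpos, div_le_iff₀ hδ]
      have e2 : (g c)^2 * |τ i - τ (i-1) - δ| ≤ M^2 * (C*δ^3) :=
        mul_le_mul hg2 hΔ (abs_nonneg _) (by positivity)
      nlinarith [hΔpos.le, abs_nonneg (τ i - τ (i-1) - δ), sq_nonneg (g c)]
    have hint_ab : IntervalIntegrable h volume (τ (i-1)) (τ i) :=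
      (hhc.mono (uIcc_subset_Icc haI hbI)).intervalIntegrable
    have part2 : |(∫ x in τ (i-1)..τ i, h x) - (g c)^2 * (τ i - τ (i-1))|
        ≤ (ε/(4*L)) * (τ i - τ (i-1)) := by
      have e1 : (∫ x in τ (i-1)..τ i, h x) - (g c)^2 * (τ i - τ (i-1))
          = ∫ x in τ (i-1)..τ i, (h x - h c) := by
        rw [intervalIntegral.integral_sub hint_ab intervalIntegrable_const,
          intervalIntegral.integral_const]
        simp only [hhdef, smul_eq_mul]
        ring
      rw [e1]
      have hbd : ∀ x ∈ Set.uIoc (τ (i-1)) (τ i), ‖h x - h c‖ ≤ ε/(4*L) := by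
        intro x hx
        rw [uIoc_of_le hab.le] at hx
        have hxI : x ∈ Icc 0 L := hsub ⟨hx.1.le, hx.2⟩
        have hxc : dist x c < d₀ := by
          rw [Real.dist_eq]
          have : |x - c| ≤ τ i - τ (i-1) := by
            rw [abs_sub_le_iff]
            constructor <;> linarith [hx.1, hx.2, hc.1, hc.2]
          calc |x - c| ≤ τ i - τ (i-1) := this
            _ ≤ δ + C*δ^3 := hΔle
            _ < d₀ := hB
        have := hucd x hxI c hcI hxc
        rw [Real.dist_eq] at this
        rw [Real.norm_eq_abs]
        exact this.le
      have := intervalIntegral.norm_integral_le_of_norm_le_const hbd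
      rwa [Real.norm_eq_abs, abs_of_pos hΔpos] at this
    calc |δ * ((θ (τ i) - θ (τ (i-1)))/δ)^2 - ∫ x in τ (i-1)..τ i, h x|
        ≤ |δ * ((θ (τ i) - θ (τ (i-1)))/δ)^2 - (g c)^2 * (τ i - τ (i-1))|
          + |(g c)^2 * (τ i - τ (i-1)) - ∫ x in τ (i-1)..τ i, h x| := abs_sub_le _ _ _
      _ ≤ M^2*C*δ^2*(τ i - τ (i-1)) + (ε/(4*L)) * (τ i - τ (i-1)) := by
          rw [hterm]
          have := part2
          rw [abs_sub_comm] at this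
          linarith [part1]
      _ = (ε/(4*L) + M^2*C*δ^2) * (τ i - τ (i-1)) := by ring
  -- rewrite goal sum
  have hS : (L/(n:ℝ)) * ∑ i ∈ Finset.Icc 1 (n-1),
      |(θ ((s n i + s n (i+1))/2) - θ ((s n (i-1) + s n i)/2)) * ((n:ℝ)/L)|^2
      = ∑ i ∈ Finset.Icc 1 (n-1), δ * ((θ (τ i) - θ (τ (i-1)))/δ)^2 := by
    rw [Finset.mul_sum]
    refine Finset.sum_congr rfl fun i hi => ?_
    obtain ⟨h1, h2⟩ := Finset.mem_Icc.mp hi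
    have e : i - 1 + 1 = i := by omega
    have harg1 : (s n i + s n (i+1))/2 = τ i := rfl
    have harg2 : (s n (i-1) + s n i)/2 = τ (i-1) := by simp only [hτdef, e]
    rw [sq_abs, harg1, harg2]
    have hmul : (θ (τ i) - θ (τ (i-1))) * ((n:ℝ)/L) = (θ (τ i) - θ (τ (i-1)))/δ := by
      rw [hδdef]; field_simp
    rw [hmul, hδdef]
  -- sums telescoping and to integral
  have hIcc : Finset.Icc 1 (n-1) = Finset.Ico 1 n := by
    rw [← Finset.Ico_add_one_right_eq_Icc]; congr 1; omega
  have hBint : (∑ i ∈ Finset.Icc 1 (n-1), ∫ x in τ (i-1)..τ i, h x)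
      = ∫ x in (τ 0)..(τ (n-1)), h x := by
    rw [hIcc, Finset.sum_Ico_eq_sum_range]
    have hintk : ∀ k < n - 1, IntervalIntegrable h volume (τ k) (τ (k+1)) := by
      intro k hk
      exact (hhc.mono (uIcc_subset_Icc (hτmem k (by omega)) (hτmem (k+1) (by omega)))).intervalIntegrable
    rw [← intervalIntegral.sum_integral_adjacent_intervals hintk]
    refine Finset.sum_congr rfl fun k hk => ?_
    have e1 : 1 + k - 1 = k := by omega
    have e2 : 1 + k = k + 1 := by omega
    rw [e1, e2]
  have hTel : (∑ i ∈ Finset.Icc 1 (n-1), (τ i - τ (i-1))) = τ (n-1) - τ 0 := by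
    rw [hIcc, Finset.sum_Ico_eq_sum_range]
    have : ∀ k, τ (1 + k) - τ (1 + k - 1) = τ (k+1) - τ k := by
      intro k
      have e1 : 1 + k - 1 = k := by omega
      have e2 : 1 + k = k + 1 := by omega
      rw [e1, e2]
    simp only [this]
    exact Finset.sum_range_sub τ (n-1)
  have hτ0mem : τ 0 ∈ Icc 0 L := hτmem 0 (by omega)
  have hτlmem : τ (n-1) ∈ Icc 0 L := hτmem (n-1) le_rfl
  have hτmono : ∀ i, i < n - 1 → τ i < τ (i+1) := by
    intro i hi
    have := hτlt (i+1) (by omega) (by omega)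
    rwa [Nat.add_sub_cancel] at this
  have hord : τ 0 ≤ τ (n-1) := mono_aux τ (n-1) hτmono 0 (n-1) (Nat.zero_le _) le_rfl
  -- main sum estimate
  have hK0 : 0 ≤ ε/(4*L) + M^2*C*δ^2 := by positivity
  have hsumdiff : |(∑ i ∈ Finset.Icc 1 (n-1), δ * ((θ (τ i) - θ (τ (i-1)))/δ)^2)
      - ∫ x in (τ 0)..(τ (n-1)), h x| ≤ (ε/(4*L) + M^2*C*δ^2) * L := by
    rw [← hBint, ← Finset.sum_sub_distrib]
    calc |∑ i ∈ Finset.Icc 1 (n-1),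
          (δ * ((θ (τ i) - θ (τ (i-1)))/δ)^2 - ∫ x in τ (i-1)..τ i, h x)|
        ≤ ∑ i ∈ Finset.Icc 1 (n-1),
          |δ * ((θ (τ i) - θ (τ (i-1)))/δ)^2 - ∫ x in τ (i-1)..τ i, h x| :=
          Finset.abs_sum_le_sum_abs _ _
      _ ≤ ∑ i ∈ Finset.Icc 1 (n-1), (ε/(4*L) + M^2*C*δ^2) * (τ i - τ (i-1)) :=
          Finset.sum_le_sum key
      _ = (ε/(4*L) + M^2*C*δ^2) * (τ (n-1) - τ 0) := by rw [← Finset.mul_sum, hTel]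
      _ ≤ (ε/(4*L) + M^2*C*δ^2) * L := by
          apply mul_le_mul_of_nonneg_left _ hK0
          linarith [hτ0mem.1, hτlmem.2]
  -- endpoints
  have hτ0le : τ 0 ≤ (δ + C*δ^3)/2 := by
    have := (abs_le.mp (hgap 0 (by omega))).2
    rw [hs0 n hn1] at this
    simp only [hτdef, hs0 n hn1]
    norm_num
    linarith
  have hτlle : L - τ (n-1) ≤ (δ + C*δ^3)/2 := by
    have hg := (abs_le.mp (hgap (n-1) (by omega))).2
    have e : n - 1 + 1 = n := by omega
    rw [e, hsN n hn1] at hg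
    simp only [hτdef, e, hsN n hn1]
    linarith
  have hend : |(∫ x in (0:ℝ)..L, h x) - ∫ x in (τ 0)..(τ (n-1)), h x|
      ≤ M^2 * (δ + C*δ^3) := by
    have i1 : IntervalIntegrable h volume 0 (τ 0) :=
      (hhc.mono (uIcc_subset_Icc (left_mem_Icc.mpr hL.le) hτ0mem)).intervalIntegrable
    have i2 : IntervalIntegrable h volume (τ 0) (τ (n-1)) :=
      (hhc.mono (uIcc_subset_Icc hτ0mem hτlmem)).intervalIntegrable
    have i3 : IntervalIntegrable h volume (τ (n-1)) L :=
      (hhc.mono (uIcc_subset_Icc hτlmem (right_mem_Icc.mpr hL.le))).intervalIntegrable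
    have esplit : (∫ x in (0:ℝ)..L, h x)
        = (∫ x in (0:ℝ)..τ 0, h x) + (∫ x in (τ 0)..(τ (n-1)), h x)
          + ∫ x in τ (n-1)..L, h x := by
      rw [intervalIntegral.integral_add_adjacent_intervals i1 i2,
        intervalIntegral.integral_add_adjacent_intervals (i1.trans i2) i3]
    have b1 : |∫ x in (0:ℝ)..τ 0, h x| ≤ M^2 * (τ 0) := by
      have := intervalIntegral.norm_integral_le_of_norm_le_const
        (C := M^2) (a := (0:ℝ)) (b := τ 0) (f := h) ?_
      · rwa [Real.norm_eq_abs, sub_zero, abs_of_nonneg hτ0mem.1] at this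
      · intro x hx
        rw [uIoc_of_le hτ0mem.1] at hx
        exact hhb x ⟨hx.1.le, le_trans hx.2 hτ0mem.2⟩
    have b2 : |∫ x in τ (n-1)..L, h x| ≤ M^2 * (L - τ (n-1)) := by
      have := intervalIntegral.norm_integral_le_of_norm_le_const
        (C := M^2) (a := τ (n-1)) (b := L) (f := h) ?_
      · have hnn2 : (0:ℝ) ≤ L - τ (n-1) := by linarith [hτlmem.2]
        rwa [Real.norm_eq_abs, abs_of_nonneg hnn2] at this
      · intro x hx
        rw [uIoc_of_le hτlmem.2] at hx
        exact hhb x ⟨le_trans hτlmem.1 hx.1.le, hx.2⟩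
    have e2 : (∫ x in (0:ℝ)..L, h x) - (∫ x in (τ 0)..(τ (n-1)), h x)
        = (∫ x in (0:ℝ)..τ 0, h x) + ∫ x in τ (n-1)..L, h x := by
      rw [esplit]; ring
    rw [e2]
    calc |(∫ x in (0:ℝ)..τ 0, h x) + ∫ x in τ (n-1)..L, h x|
        ≤ |∫ x in (0:ℝ)..τ 0, h x| + |∫ x in τ (n-1)..L, h x| := abs_add_le _ _
      _ ≤ M^2 * (τ 0) + M^2 * (L - τ (n-1)) := by linarith
      _ ≤ M^2 * (δ + C*δ^3) := by nlinarith [hτ0le, hτlle, hM0, sq_nonneg M]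
  -- conclusion
  rw [Real.dist_eq]
  rw [hS]
  have hI : (∫ σ in (0:ℝ)..L, (derivWithin θ (Icc 0 L) σ) ^ 2) = ∫ x in (0:ℝ)..L, h x := rfl
  rw [hI]
  have hquarter : (ε/(4*L) + M^2*C*δ^2) * L = ε/4 + M^2*C*δ^2*L := by
    field_simp
  calc |(∑ i ∈ Finset.Icc 1 (n-1), δ * ((θ (τ i) - θ (τ (i-1)))/δ)^2)
        - ∫ x in (0:ℝ)..L, h x|
      ≤ |(∑ i ∈ Finset.Icc 1 (n-1), δ * ((θ (τ i) - θ (τ (i-1)))/δ)^2)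
          - ∫ x in (τ 0)..(τ (n-1)), h x|
        + |(∫ x in (τ 0)..(τ (n-1)), h x) - ∫ x in (0:ℝ)..L, h x| := abs_sub_le _ _ _
    _ ≤ (ε/(4*L) + M^2*C*δ^2) * L + M^2 * (δ + C*δ^3) := by
        have := hend
        rw [abs_sub_comm] at this
        linarith [hsumdiff]
    _ < ε := by
        rw [hquarter]
        have hA' : M^2*C*δ^2*L + M^2*(δ + C*δ^3) < ε/2 := hA
        linarith
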